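/- Classical weakening is admissible in the ecumenical stoup calculus LCE: for all contexts Γ, Γ', Δ, Δ' and stoup Π, if the sequent Γ ⊢ Δ; Π is provable in LCE, then the sequent Γ, Γ' ⊢ Δ, Δ'; Π is provable in LCE. -/

import Mathlib

namespace Ecumenical

/-! First-order ecumenical language (locally nameless: de Bruijn bound vars,
    named free vars) and the ecumenical sequent calculus LE. -/

inductive Tm where
  | bvar : Nat → Tm
  | fvar : Nat → Tm

/-- Replace the bound variable of index `k` by the free variable `y`. -/
def Tm.openT (k y : Nat) : Tm → Tm
  | .bvar n => if n = k then .fvar y else .bvar n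
  | .fvar n => .fvar n

def Tm.fv : Tm → Finset Nat
  | .bvar _ => ∅
  | .fvar n => {n}

/-- Ecumenical first-order formulas. `ati`/`atc` are intuitionistic/classical
    atomic predicates; quantifiers bind the de Bruijn index 0. -/
inductive Fm where
  | ati : Nat → List Tm → Fm
  | atc : Nat → List Tm → Fm
  | bot : Fm
  | neg : Fm → Fm
  | and : Fm → Fm → Fm
  | ori : Fm → Fm → Fm
  | orc : Fm → Fm → Fm
  | impi : Fm → Fm → Fm
  | impc : Fm → Fm → Fm
  | all : Fm → Fm
  | exi : Fm → Fm
  | exc : Fm → Fm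

def Fm.openF (k y : Nat) : Fm → Fm
  | .ati p ts => .ati p (ts.map (Tm.openT k y))
  | .atc p ts => .atc p (ts.map (Tm.openT k y))
  | .bot => .bot
  | .neg A => .neg (A.openF k y)
  | .and A B => .and (A.openF k y) (B.openF k y)
  | .ori A B => .ori (A.openF k y) (B.openF k y)
  | .orc A B => .orc (A.openF k y) (B.openF k y)
  | .impi A B => .impi (A.openF k y) (B.openF k y)
  | .impc A B => .impc (A.openF k y) (B.openF k y)
  | .all A => .all (A.openF (k+1) y)
  | .exi A => .exi (A.openF (k+1) y)
  | .exc A => .exc (A.openF (k+1) y)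

/-- `A.inst y` is `A[y/x]`: the body of a quantifier instantiated with `y`. -/
def Fm.inst (A : Fm) (y : Nat) : Fm := A.openF 0 y

def Fm.fv : Fm → Finset Nat
  | .ati _ ts => ts.foldr (fun t s => t.fv ∪ s) ∅
  | .atc _ ts => ts.foldr (fun t s => t.fv ∪ s) ∅
  | .bot => ∅
  | .neg A => A.fv
  | .and A B => A.fv ∪ B.fv
  | .ori A B => A.fv ∪ B.fv
  | .orc A B => A.fv ∪ B.fv
  | .impi A B => A.fv ∪ B.fv
  | .impc A B => A.fv ∪ B.fv
  | .all A => A.fv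
  | .exi A => A.fv
  | .exc A => A.fv

/-- `y` is fresh for every formula in the context `Γ`. -/
def FreshIn (y : Nat) (Γ : Multiset Fm) : Prop := ∀ B ∈ Γ, y ∉ B.fv

/-- Intuitionistic bi-implication `A ↔i B`. -/
def Fm.iffi (A B : Fm) : Fm := .and (.impi A B) (.impi B A)


/-- A formula is negative iff its main connective is classical or negation. -/
def Fm.isNeg : Fm → Bool
  | .atc _ _ => true
  | .orc _ _ => true
  | .impc _ _ => true
  | .exc _ => true
  | .neg _ => true
  | _ => false

/-- A formula is positive iff it is not negative. -/
def Fm.isPos (A : Fm) : Bool := !A.isNeg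

/-- `y` is fresh for the (at most one) formula in the stoup `S`. -/
def FreshInO (y : Nat) : Option Fm → Prop
  | none => True
  | some A => y ∉ A.fv

/-- The ecumenical sequent calculus with stoup, with the cut rules P-cut and N-cut.
    Sequents are `Γ ⊢ Δ; S`, where `Γ` is the left context, `Δ` the classical
    right context, and the stoup `S` holds at most one formula (`none` = `·`). -/
inductive LCE : Multiset Fm → Multiset Fm → Option Fm → Prop where
  | init (p ts Γ Δ) : LCE (.ati p ts ::ₘ Γ) Δ (some (.ati p ts))
  | der {Γ Δ P} : P.isPos = true → LCE Γ (P ::ₘ Δ) (some P) → LCE Γ (P ::ₘ Δ) none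
  | store {Γ Δ N} : N.isNeg = true → LCE Γ (N ::ₘ Δ) none → LCE Γ Δ (some N)
  | wk {Γ Δ} (A) : LCE Γ Δ none → LCE Γ Δ (some A)
  | andL {Γ Δ A B S} : LCE (A ::ₘ B ::ₘ Γ) Δ S → LCE (.and A B ::ₘ Γ) Δ S
  | andR {Γ Δ A B} : LCE Γ Δ (some A) → LCE Γ Δ (some B) →
      LCE Γ Δ (some (.and A B))
  | oriL {Γ Δ A B S} : LCE (A ::ₘ Γ) Δ S → LCE (B ::ₘ Γ) Δ S →
      LCE (.ori A B ::ₘ Γ) Δ S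
  | oriR1 {Γ Δ A} (B) : LCE Γ Δ (some A) → LCE Γ Δ (some (.ori A B))
  | oriR2 {Γ Δ B} (A) : LCE Γ Δ (some B) → LCE Γ Δ (some (.ori A B))
  | impiL {Γ Δ A B S} : LCE (.impi A B ::ₘ Γ) Δ (some A) → LCE (B ::ₘ Γ) Δ S →
      LCE (.impi A B ::ₘ Γ) Δ S
  | impiR {Γ Δ A B} : LCE (A ::ₘ Γ) Δ (some B) → LCE Γ Δ (some (.impi A B))
  | negL {Γ Δ A} : LCE (.neg A ::ₘ Γ) Δ (some A) → LCE (.neg A ::ₘ Γ) Δ none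
  | negR {Γ Δ A} : LCE (A ::ₘ Γ) Δ none → LCE Γ (.neg A ::ₘ Δ) none
  | exiL {Γ Δ A S} (y) : y ∉ A.fv → FreshIn y Γ → FreshIn y Δ → FreshInO y S →
      LCE (A.inst y ::ₘ Γ) Δ S → LCE (.exi A ::ₘ Γ) Δ S
  | exiR {Γ Δ A} (y) : LCE Γ Δ (some (A.inst y)) → LCE Γ Δ (some (.exi A))
  | allL {Γ Δ A S} (y) : LCE (A.inst y ::ₘ .all A ::ₘ Γ) Δ S →
      LCE (.all A ::ₘ Γ) Δ S
  | allR {Γ Δ A} (y) : y ∉ A.fv → FreshIn y Γ → FreshIn y Δ →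
      LCE Γ Δ (some (A.inst y)) → LCE Γ Δ (some (.all A))
  | orcL {Γ Δ A B} : LCE (A ::ₘ Γ) Δ none → LCE (B ::ₘ Γ) Δ none →
      LCE (.orc A B ::ₘ Γ) Δ none
  | orcR {Γ Δ A B} : LCE Γ (A ::ₘ B ::ₘ Δ) none → LCE Γ (.orc A B ::ₘ Δ) none
  | impcL {Γ Δ A B} : LCE (.impc A B ::ₘ Γ) Δ (some A) → LCE (B ::ₘ Γ) Δ none →
      LCE (.impc A B ::ₘ Γ) Δ none
  | impcR {Γ Δ A B} : LCE (A ::ₘ Γ) (B ::ₘ Δ) none → LCE Γ (.impc A B ::ₘ Δ) none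
  | Lc {Γ Δ p ts} : LCE (.ati p ts ::ₘ Γ) Δ none → LCE (.atc p ts ::ₘ Γ) Δ none
  | Rc {Γ Δ p ts} : LCE Γ (.ati p ts ::ₘ Δ) none → LCE Γ (.atc p ts ::ₘ Δ) none
  | excL {Γ Δ A} (y) : y ∉ A.fv → FreshIn y Γ → FreshIn y Δ →
      LCE (A.inst y ::ₘ Γ) Δ none → LCE (.exc A ::ₘ Γ) Δ none
  | excR {Γ Δ A} (y) : LCE Γ (A.inst y ::ₘ .exc A ::ₘ Δ) none →
      LCE Γ (.exc A ::ₘ Δ) none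
  | pcut {Γ Δ P S} : P.isPos = true → LCE Γ Δ (some P) → LCE (P ::ₘ Γ) Δ S →
      LCE Γ Δ S
  | ncut {Γ Δ N S St} : N.isNeg = true →
      (St = none ∨ ∃ P, St = some P ∧ P.isPos = true ∧ P ∈ Δ) →
      LCE Γ (N ::ₘ Δ) St → LCE (N ::ₘ Γ) Δ S → LCE Γ Δ S

/-! ### Auxiliary machinery for admissibility of weakening -/

/-- Rename free variables of a term. -/
def Tm.rename (σ : Nat → Nat) : Tm → Tm
  | .bvar n => .bvar n
  | .fvar n => .fvar (σ n)

/-- Rename free variables of a formula. -/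
def Fm.rename (σ : Nat → Nat) : Fm → Fm
  | .ati p ts => .ati p (ts.map (Tm.rename σ))
  | .atc p ts => .atc p (ts.map (Tm.rename σ))
  | .bot => .bot
  | .neg A => .neg (A.rename σ)
  | .and A B => .and (A.rename σ) (B.rename σ)
  | .ori A B => .ori (A.rename σ) (B.rename σ)
  | .orc A B => .orc (A.rename σ) (B.rename σ)
  | .impi A B => .impi (A.rename σ) (B.rename σ)
  | .impc A B => .impc (A.rename σ) (B.rename σ)
  | .all A => .all (A.rename σ)
  | .exi A => .exi (A.rename σ)
  | .exc A => .exc (A.rename σ)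

lemma Tm.rename_openT (σ : Nat → Nat) (k y : Nat) (t : Tm) :
    (t.openT k y).rename σ = (t.rename σ).openT k (σ y) := by
  cases t with
  | bvar n => by_cases h : n = k <;> simp [Tm.openT, Tm.rename, h]
  | fvar n => simp [Tm.openT, Tm.rename]

lemma Fm.rename_openF (σ : Nat → Nat) (k y : Nat) (A : Fm) :
    (A.openF k y).rename σ = (A.rename σ).openF k (σ y) := by
  induction A generalizing k with
  | ati p ts => simp [Fm.openF, Fm.rename, List.map_map, Function.comp,
      Tm.rename_openT]
  | atc p ts => simp [Fm.openF, Fm.rename, List.map_map, Function.comp,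
      Tm.rename_openT]
  | _ => simp_all [Fm.openF, Fm.rename]

lemma Fm.rename_inst (σ : Nat → Nat) (y : Nat) (A : Fm) :
    (A.inst y).rename σ = (A.rename σ).inst (σ y) :=
  Fm.rename_openF σ 0 y A

lemma Tm.fv_rename (σ : Nat → Nat) (t : Tm) :
    (t.rename σ).fv = t.fv.image σ := by
  cases t <;> simp [Tm.rename, Tm.fv]

lemma Fm.fv_rename (σ : Nat → Nat) (A : Fm) :
    (A.rename σ).fv = A.fv.image σ := by
  induction A with
  | ati p ts =>
      simp only [Fm.rename, Fm.fv]
      induction ts with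
      | nil => simp
      | cons t ts ih => simp [ih, Tm.fv_rename, Finset.image_union]
  | atc p ts =>
      simp only [Fm.rename, Fm.fv]
      induction ts with
      | nil => simp
      | cons t ts ih => simp [ih, Tm.fv_rename, Finset.image_union]
  | _ => simp_all [Fm.rename, Fm.fv, Finset.image_union]

lemma list_map_self {f : Tm → Tm} {ts : List Tm} (h : ∀ t ∈ ts, f t = t) :
    ts.map f = ts := by
  induction ts with
  | nil => rfl
  | cons t ts ih =>
      simp [h t (by simp), ih fun u hu => h u (List.mem_cons_of_mem _ hu)]

lemma Tm.rename_fix {σ : Nat → Nat} {t : Tm} (h : ∀ x ∈ t.fv, σ x = x) :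
    t.rename σ = t := by
  cases t with
  | bvar n => rfl
  | fvar n => simp [Tm.rename, h n (by simp [Tm.fv])]

lemma Fm.rename_fix {σ : Nat → Nat} {A : Fm} (h : ∀ x ∈ A.fv, σ x = x) :
    A.rename σ = A := by
  induction A with
  | ati p ts =>
      simp only [Fm.rename, Fm.ati.injEq, true_and]
      have : ∀ t ∈ ts, (∀ x ∈ t.fv, σ x = x) := by
        intro t ht x hx
        apply h
        simp only [Fm.fv]
        clear h
        induction ts with
        | nil => simp at ht
        | cons u us ih =>
            rcases List.mem_cons.mp ht with h' | h'
            · subst h'; simp [hx]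
            · simp [ih h']
      exact list_map_self fun t ht => Tm.rename_fix (this t ht)
  | atc p ts =>
      simp only [Fm.rename, Fm.atc.injEq, true_and]
      have : ∀ t ∈ ts, (∀ x ∈ t.fv, σ x = x) := by
        intro t ht x hx
        apply h
        simp only [Fm.fv]
        clear h
        induction ts with
        | nil => simp at ht
        | cons u us ih =>
            rcases List.mem_cons.mp ht with h' | h'
            · subst h'; simp [hx]
            · simp [ih h']
      exact list_map_self fun t ht => Tm.rename_fix (this t ht)
  | _ => simp_all [Fm.rename, Fm.fv]

lemma Tm.rename_comp (σ τ : Nat → Nat) (t : Tm) :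
    (t.rename σ).rename τ = t.rename (τ ∘ σ) := by
  cases t <;> simp [Tm.rename]

lemma Fm.rename_comp (σ τ : Nat → Nat) (A : Fm) :
    (A.rename σ).rename τ = A.rename (τ ∘ σ) := by
  induction A <;>
    simp_all [Fm.rename, List.map_map, Function.comp_def, Tm.rename_comp,
      Function.comp]

lemma Fm.isNeg_rename (σ : Nat → Nat) (A : Fm) :
    (A.rename σ).isNeg = A.isNeg := by
  cases A <;> simp [Fm.rename, Fm.isNeg]

lemma Fm.isPos_rename (σ : Nat → Nat) (A : Fm) :
    (A.rename σ).isPos = A.isPos := by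
  simp [Fm.isPos, Fm.isNeg_rename]

/-- All free variables of a context. -/
def ctxFv (Γ : Multiset Fm) : Finset Nat := (Γ.map Fm.fv).sup

lemma fv_subset_ctxFv {B : Fm} {Γ : Multiset Fm} (h : B ∈ Γ) :
    B.fv ⊆ ctxFv Γ :=
  Finset.le_iff_subset.mp (Multiset.le_sup (Multiset.mem_map_of_mem _ h))

lemma freshIn_of_not_mem_ctxFv {y : Nat} {Γ : Multiset Fm}
    (h : y ∉ ctxFv Γ) : FreshIn y Γ :=
  fun B hB hy => h (fv_subset_ctxFv hB hy)

/-- Free variables of a stoup. -/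
def stoupFv : Option Fm → Finset Nat
  | none => ∅
  | some A => A.fv

lemma ctxFv_add (Γ Γ' : Multiset Fm) :
    ctxFv (Γ + Γ') = ctxFv Γ ∪ ctxFv Γ' := by
  simp [ctxFv, Multiset.map_add, Multiset.sup_add, Finset.sup_eq_union]

/-- Swap fixes the renamed copies of a context in which `y` is fresh,
    provided `y'` avoids the renamed context. -/
lemma map_swap_fix {σ : Nat → Nat} (hσ : Function.Injective σ)
    {y y' : Nat} {Δ : Multiset Fm} (hy : FreshIn y Δ)
    (hy' : y' ∉ ctxFv (Δ.map (Fm.rename σ))) :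
    Δ.map (Fm.rename (Equiv.swap (σ y) y' ∘ σ)) = Δ.map (Fm.rename σ) := by
  apply Multiset.map_congr rfl
  intro B hB
  rw [← Fm.rename_comp]
  apply Fm.rename_fix
  intro x hx
  rw [Fm.fv_rename] at hx
  apply Equiv.swap_apply_of_ne_of_ne
  · rintro rfl
    obtain ⟨z, hz, hzx⟩ := Finset.mem_image.mp hx
    exact hy B hB (hσ hzx ▸ hz)
  · rintro rfl
    exact hy' (fv_subset_ctxFv (Multiset.mem_map_of_mem _ hB)
      ((Fm.fv_rename σ B).symm ▸ hx))

/-- Single-formula version of `map_swap_fix`. -/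
lemma rename_swap_fix {σ : Nat → Nat} (hσ : Function.Injective σ)
    {y y' : Nat} {A : Fm} (hy : y ∉ A.fv) (hy' : y' ∉ (A.rename σ).fv) :
    A.rename (Equiv.swap (σ y) y' ∘ σ) = A.rename σ := by
  rw [← Fm.rename_comp]
  apply Fm.rename_fix
  intro x hx
  apply Equiv.swap_apply_of_ne_of_ne
  · rintro rfl
    rw [Fm.fv_rename] at hx
    obtain ⟨z, hz, hzx⟩ := Finset.mem_image.mp hx
    exact hy (hσ hzx ▸ hz)
  · rintro rfl; exact hy' hx

lemma swap_comp_apply (y' y : Nat) (σ : Nat → Nat) :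
    (Equiv.swap (σ y) y' ∘ σ) y = y' := by
  simp [Equiv.swap_apply_left]

/-- Combined renaming + weakening, by induction on the derivation. -/
theorem LCE.rename_weak {Γ Δ : Multiset Fm} {S : Option Fm} (h : LCE Γ Δ S) :
    ∀ σ : Nat → Nat, Function.Injective σ → ∀ Γ' Δ' : Multiset Fm,
      LCE (Γ.map (Fm.rename σ) + Γ') (Δ.map (Fm.rename σ) + Δ')
        (S.map (Fm.rename σ)) := by
  induction h with
  | init p ts Γ Δ =>
      intro σ hσ Γ' Δ'
      simpa [Fm.rename] using LCE.init p (ts.map (Tm.rename σ)) _ _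
  | der hP _ ih =>
      intro σ hσ Γ' Δ'
      have := ih σ hσ Γ' Δ'
      simp only [Multiset.map_cons, Multiset.cons_add, Option.map_some,
        Option.map_none] at this ⊢
      exact LCE.der (by simp [Fm.isPos_rename, hP]) this
  | store hN _ ih =>
      intro σ hσ Γ' Δ'
      have := ih σ hσ Γ' Δ'
      simp only [Multiset.map_cons, Multiset.cons_add, Option.map_some,
        Option.map_none] at this ⊢
      exact LCE.store (by simp [Fm.isNeg_rename, hN]) this
  | wk A _ ih =>
      intro σ hσ Γ' Δ'
      exact LCE.wk _ (ih σ hσ Γ' Δ')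
  | andL _ ih =>
      intro σ hσ Γ' Δ'
      have := ih σ hσ Γ' Δ'
      simp only [Multiset.map_cons, Multiset.cons_add, Fm.rename] at this ⊢
      exact LCE.andL this
  | andR _ _ ih1 ih2 =>
      intro σ hσ Γ' Δ'
      have h1 := ih1 σ hσ Γ' Δ'
      have h2 := ih2 σ hσ Γ' Δ'
      simp only [Option.map_some, Fm.rename] at h1 h2 ⊢
      exact LCE.andR h1 h2
  | oriL _ _ ih1 ih2 =>
      intro σ hσ Γ' Δ'
      have h1 := ih1 σ hσ Γ' Δ'
      have h2 := ih2 σ hσ Γ' Δ'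
      simp only [Multiset.map_cons, Multiset.cons_add, Fm.rename] at h1 h2 ⊢
      exact LCE.oriL h1 h2
  | oriR1 B _ ih =>
      intro σ hσ Γ' Δ'
      have := ih σ hσ Γ' Δ'
      simp only [Option.map_some, Fm.rename] at this ⊢
      exact LCE.oriR1 _ this
  | oriR2 A _ ih =>
      intro σ hσ Γ' Δ'
      have := ih σ hσ Γ' Δ'
      simp only [Option.map_some, Fm.rename] at this ⊢
      exact LCE.oriR2 _ this
  | impiL _ _ ih1 ih2 =>
      intro σ hσ Γ' Δ'
      have h1 := ih1 σ hσ Γ' Δ'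
      have h2 := ih2 σ hσ Γ' Δ'
      simp only [Multiset.map_cons, Multiset.cons_add, Option.map_some,
        Fm.rename] at h1 h2 ⊢
      exact LCE.impiL h1 h2
  | impiR _ ih =>
      intro σ hσ Γ' Δ'
      have := ih σ hσ Γ' Δ'
      simp only [Multiset.map_cons, Multiset.cons_add, Option.map_some,
        Fm.rename] at this ⊢
      exact LCE.impiR this
  | negL _ ih =>
      intro σ hσ Γ' Δ'
      have := ih σ hσ Γ' Δ'
      simp only [Multiset.map_cons, Multiset.cons_add, Option.map_some,
        Option.map_none, Fm.rename] at this ⊢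
      exact LCE.negL this
  | negR _ ih =>
      intro σ hσ Γ' Δ'
      have := ih σ hσ Γ' Δ'
      simp only [Multiset.map_cons, Multiset.cons_add, Option.map_none,
        Fm.rename] at this ⊢
      exact LCE.negR this
  | @exiL Γ Δ A S y hyA hyΓ hyΔ hyS _ ih =>
      intro σ hσ Γ' Δ'
      simp only [Multiset.map_cons, Multiset.cons_add, Fm.rename]
      obtain ⟨y', hy'⟩ := Infinite.exists_notMem_finset
        ((A.rename σ).fv ∪ ctxFv (Γ.map (Fm.rename σ) + Γ') ∪
          ctxFv (Δ.map (Fm.rename σ) + Δ') ∪ stoupFv (S.map (Fm.rename σ)))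
      simp only [Finset.mem_union, not_or] at hy'
      obtain ⟨⟨⟨hy'A, hy'Γ⟩, hy'Δ⟩, hy'S⟩ := hy'
      rw [ctxFv_add, Finset.mem_union, not_or] at hy'Γ hy'Δ
      refine LCE.exiL y' hy'A
        (freshIn_of_not_mem_ctxFv (by rw [ctxFv_add]; simp [hy'Γ.1, hy'Γ.2]))
        (freshIn_of_not_mem_ctxFv (by rw [ctxFv_add]; simp [hy'Δ.1, hy'Δ.2]))
        ?_ ?_
      · cases S with
        | none => trivial
        | some P => exact fun hm => hy'S (by simpa [stoupFv] using hm)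
      · have key := ih (Equiv.swap (σ y) y' ∘ σ)
          ((Equiv.swap (σ y) y').injective.comp hσ) Γ' Δ'
        rw [Multiset.map_cons, Multiset.cons_add,
          map_swap_fix hσ hyΓ hy'Γ.1, map_swap_fix hσ hyΔ hy'Δ.1,
          Fm.rename_inst, rename_swap_fix hσ hyA hy'A,
          swap_comp_apply] at key
        cases S with
        | none => simpa using key
        | some P =>
            simp only [Option.map_some] at key ⊢
            rwa [rename_swap_fix hσ hyS (by simpa [stoupFv] using hy'S)] at key
  | @exiR Γ Δ A y _ ih =>
      intro σ hσ Γ' Δ'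
      have := ih σ hσ Γ' Δ'
      simp only [Option.map_some, Fm.rename, Fm.rename_inst] at this ⊢
      exact LCE.exiR (σ y) this
  | @allL Γ Δ A S y _ ih =>
      intro σ hσ Γ' Δ'
      have := ih σ hσ Γ' Δ'
      simp only [Multiset.map_cons, Multiset.cons_add, Fm.rename,
        Fm.rename_inst] at this ⊢
      exact LCE.allL (σ y) this
  | @allR Γ Δ A y hyA hyΓ hyΔ _ ih =>
      intro σ hσ Γ' Δ'
      simp only [Option.map_some, Fm.rename]
      obtain ⟨y', hy'⟩ := Infinite.exists_notMem_finset
        ((A.rename σ).fv ∪ ctxFv (Γ.map (Fm.rename σ) + Γ') ∪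
          ctxFv (Δ.map (Fm.rename σ) + Δ'))
      simp only [Finset.mem_union, not_or] at hy'
      obtain ⟨⟨hy'A, hy'Γ⟩, hy'Δ⟩ := hy'
      rw [ctxFv_add, Finset.mem_union, not_or] at hy'Γ hy'Δ
      refine LCE.allR y' hy'A
        (freshIn_of_not_mem_ctxFv (by rw [ctxFv_add]; simp [hy'Γ.1, hy'Γ.2]))
        (freshIn_of_not_mem_ctxFv (by rw [ctxFv_add]; simp [hy'Δ.1, hy'Δ.2]))
        ?_
      have key := ih (Equiv.swap (σ y) y' ∘ σ)
        ((Equiv.swap (σ y) y').injective.comp hσ) Γ' Δ'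
      rw [map_swap_fix hσ hyΓ hy'Γ.1, map_swap_fix hσ hyΔ hy'Δ.1] at key
      simp only [Option.map_some, Fm.rename_inst,
        rename_swap_fix hσ hyA hy'A, swap_comp_apply] at key
      exact key
  | orcL _ _ ih1 ih2 =>
      intro σ hσ Γ' Δ'
      have h1 := ih1 σ hσ Γ' Δ'
      have h2 := ih2 σ hσ Γ' Δ'
      simp only [Multiset.map_cons, Multiset.cons_add, Option.map_none,
        Fm.rename] at h1 h2 ⊢
      exact LCE.orcL h1 h2
  | orcR _ ih =>
      intro σ hσ Γ' Δ'
      have := ih σ hσ Γ' Δ'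
      simp only [Multiset.map_cons, Multiset.cons_add, Option.map_none,
        Fm.rename] at this ⊢
      exact LCE.orcR this
  | impcL _ _ ih1 ih2 =>
      intro σ hσ Γ' Δ'
      have h1 := ih1 σ hσ Γ' Δ'
      have h2 := ih2 σ hσ Γ' Δ'
      simp only [Multiset.map_cons, Multiset.cons_add, Option.map_some,
        Option.map_none, Fm.rename] at h1 h2 ⊢
      exact LCE.impcL h1 h2
  | impcR _ ih =>
      intro σ hσ Γ' Δ'
      have := ih σ hσ Γ' Δ'
      simp only [Multiset.map_cons, Multiset.cons_add, Option.map_none,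
        Fm.rename] at this ⊢
      exact LCE.impcR this
  | Lc _ ih =>
      intro σ hσ Γ' Δ'
      have := ih σ hσ Γ' Δ'
      simp only [Multiset.map_cons, Multiset.cons_add, Option.map_none,
        Fm.rename] at this ⊢
      exact LCE.Lc this
  | Rc _ ih =>
      intro σ hσ Γ' Δ'
      have := ih σ hσ Γ' Δ'
      simp only [Multiset.map_cons, Multiset.cons_add, Option.map_none,
        Fm.rename] at this ⊢
      exact LCE.Rc this
  | @excL Γ Δ A y hyA hyΓ hyΔ _ ih =>
      intro σ hσ Γ' Δ'
      simp only [Multiset.map_cons, Multiset.cons_add, Option.map_none,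
        Fm.rename]
      obtain ⟨y', hy'⟩ := Infinite.exists_notMem_finset
        ((A.rename σ).fv ∪ ctxFv (Γ.map (Fm.rename σ) + Γ') ∪
          ctxFv (Δ.map (Fm.rename σ) + Δ'))
      simp only [Finset.mem_union, not_or] at hy'
      obtain ⟨⟨hy'A, hy'Γ⟩, hy'Δ⟩ := hy'
      rw [ctxFv_add, Finset.mem_union, not_or] at hy'Γ hy'Δ
      refine LCE.excL y' hy'A
        (freshIn_of_not_mem_ctxFv (by rw [ctxFv_add]; simp [hy'Γ.1, hy'Γ.2]))
        (freshIn_of_not_mem_ctxFv (by rw [ctxFv_add]; simp [hy'Δ.1, hy'Δ.2]))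
        ?_
      have key := ih (Equiv.swap (σ y) y' ∘ σ)
        ((Equiv.swap (σ y) y').injective.comp hσ) Γ' Δ'
      rw [Multiset.map_cons, Multiset.cons_add,
        map_swap_fix hσ hyΓ hy'Γ.1, map_swap_fix hσ hyΔ hy'Δ.1,
        Fm.rename_inst, rename_swap_fix hσ hyA hy'A, swap_comp_apply] at key
      exact key
  | @excR Γ Δ A y _ ih =>
      intro σ hσ Γ' Δ'
      have := ih σ hσ Γ' Δ'
      simp only [Multiset.map_cons, Multiset.cons_add, Option.map_none,
        Fm.rename, Fm.rename_inst] at this ⊢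
      exact LCE.excR (σ y) this
  | pcut hP _ _ ih1 ih2 =>
      intro σ hσ Γ' Δ'
      have h1 := ih1 σ hσ Γ' Δ'
      have h2 := ih2 σ hσ Γ' Δ'
      simp only [Multiset.map_cons, Multiset.cons_add, Option.map_some] at h1 h2
      exact LCE.pcut (by simp [Fm.isPos_rename, hP]) h1 h2
  | @ncut Γ Δ N S St hN hSt _ _ ih1 ih2 =>
      intro σ hσ Γ' Δ'
      have h1 := ih1 σ hσ Γ' Δ'
      have h2 := ih2 σ hσ Γ' Δ'
      simp only [Multiset.map_cons, Multiset.cons_add] at h1 h2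
      refine LCE.ncut (N := N.rename σ) (by simp [Fm.isNeg_rename, hN]) ?_ h1 h2
      rcases hSt with rfl | ⟨P, rfl, hP, hPΔ⟩
      · exact Or.inl rfl
      · exact Or.inr ⟨P.rename σ, rfl, by simp [Fm.isPos_rename, hP],
          Multiset.mem_add.mpr (Or.inl (Multiset.mem_map_of_mem _ hPΔ))⟩

/-- Classical weakening is admissible in LCE. -/
theorem LCE_weakening_admissible (Γ Γ' Δ Δ' : Multiset Fm) (S : Option Fm)
    (h : LCE Γ Δ S) : LCE (Γ + Γ') (Δ + Δ') S := by 
  have := h.rename_weak id Function.injective_id Γ' Δ'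
  have hid : ∀ A : Fm, A.rename id = A := fun A => Fm.rename_fix (by simp)
  cases S with
  | none =>
      simpa [Multiset.map_congr rfl (fun B _ => hid B)] using this
  | some P =>
      simpa [Multiset.map_congr rfl (fun B _ => hid B), hid P] using this

end Ecumenical
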